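/- Let A = (a_{ij}) be a real symmetric m×m matrix with a_{ii} < 0 for all i and a_{ij} ≥ 0 for all i ≠ j, and suppose the graph on {1,…,m} with edges {i,j} whenever a_{ij} > 0 is connected. If the quadratic form x ↦ xᵀAx is negative semidefinite but not negative definite, then its kernel is one-dimensional and is spanned by a vector all of whose coordinates are strictly positive. -/
import Mathlib


open Matrix

private lemma pf_sym_dot {m : ℕ} (A : Matrix (Fin m) (Fin m) ℝ) (hsymm : A.IsSymm)
    (y w : Fin m → ℝ) : y ⬝ᵥ A.mulVec w = w ⬝ᵥ A.mulVec y := by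
  rw [Matrix.dotProduct_mulVec, ← Matrix.mulVec_transpose, hsymm.eq, dotProduct_comm]

/-- If the quadratic form is nonpositive and vanishes at `y`, then `A y = 0`. -/
private lemma pf_mulVec_zero {m : ℕ} (A : Matrix (Fin m) (Fin m) ℝ) (hsymm : A.IsSymm)
    (hsemi : ∀ x : Fin m → ℝ, x ⬝ᵥ A.mulVec x ≤ 0)
    (y : Fin m → ℝ) (hy : y ⬝ᵥ A.mulVec y = 0) : A.mulVec y = 0 := by
  have key : ∀ w : Fin m → ℝ, w ⬝ᵥ A.mulVec y = 0 := by
    intro w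
    set b := w ⬝ᵥ A.mulVec y with hb
    set c := w ⬝ᵥ A.mulVec w with hc
    have hcle : c ≤ 0 := hsemi w
    have hexp : ∀ t : ℝ, 2 * t * b + t ^ 2 * c ≤ 0 := by
      intro t
      have := hsemi (y + t • w)
      have e : (y + t • w) ⬝ᵥ A.mulVec (y + t • w) =
          y ⬝ᵥ A.mulVec y + 2 * t * b + t ^ 2 * c := by
        have hs := pf_sym_dot A hsymm y w
        simp only [Matrix.mulVec_add, Matrix.mulVec_smul, dotProduct_add, add_dotProduct,
          dotProduct_smul, smul_dotProduct, smul_eq_mul, hb, hc]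
        rw [hs]; ring
      rw [e, hy, zero_add] at this
      exact this
    have hb2 : b ^ 2 ≤ 0 := by
      rcases eq_or_lt_of_le hcle with hc0 | hclt
      · have h1 := hexp 1
        have h2 := hexp (-1)
        rw [← hc0] at h1 h2
        nlinarith
      · have h1 := hexp (-b / c)
        have hcne : c ≠ 0 := ne_of_lt hclt
        have e : 2 * (-b / c) * b + (-b / c) ^ 2 * c = -(b ^ 2) / c := by
          field_simp; ring
        rw [e] at h1
        by_contra hb'
        push_neg at hb'
        have := div_neg_of_pos_of_neg hb' hclt
        rw [neg_div] at h1
        linarith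
    exact sq_eq_zero_iff.mp (le_antisymm hb2 (sq_nonneg b))
  funext i
  have := key (Pi.single i 1)
  simpa using this

/-- Replacing a null vector of the form by its componentwise absolute value
keeps the form zero. -/
private lemma pf_abs_quad {m : ℕ} (A : Matrix (Fin m) (Fin m) ℝ)
    (hoff : ∀ i j, i ≠ j → 0 ≤ A i j)
    (hsemi : ∀ x : Fin m → ℝ, x ⬝ᵥ A.mulVec x ≤ 0)
    (y : Fin m → ℝ) (hy : y ⬝ᵥ A.mulVec y = 0) :
    (fun i => |y i|) ⬝ᵥ A.mulVec (fun i => |y i|) = 0 := by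
  have expand : ∀ x : Fin m → ℝ, x ⬝ᵥ A.mulVec x = ∑ i, ∑ j, x i * (A i j * x j) := by
    intro x
    simp [dotProduct, Matrix.mulVec, Finset.mul_sum]
  have hle : y ⬝ᵥ A.mulVec y ≤ (fun i => |y i|) ⬝ᵥ A.mulVec (fun i => |y i|) := by
    rw [expand, expand]
    refine Finset.sum_le_sum fun i _ => Finset.sum_le_sum fun j _ => ?_
    rcases eq_or_ne i j with rfl | hij
    · exact le_of_eq (by linear_combination (-(A i i)) * abs_mul_abs_self (y i))
    · have h1 : 0 ≤ A i j := hoff i j hij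
      have h2 : y i * y j ≤ |y i| * |y j| := by
        calc y i * y j ≤ |y i * y j| := le_abs_self _
        _ = |y i| * |y j| := abs_mul _ _
      nlinarith
  have := hsemi (fun i => |y i|)
  linarith [hle, hy.symm.le]

/-- A nonzero nonnegative kernel vector is strictly positive. -/
private lemma pf_pos {m : ℕ} (A : Matrix (Fin m) (Fin m) ℝ) (hsymm : A.IsSymm)
    (hoff : ∀ i j, i ≠ j → 0 ≤ A i j)
    (hconn : ∀ S : Set (Fin m), S.Nonempty → Sᶜ.Nonempty →
      ∃ i ∈ S, ∃ j ∈ Sᶜ, 0 < A i j)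
    (z : Fin m → ℝ) (hz0 : ∀ i, 0 ≤ z i) (hAz : A.mulVec z = 0) (hne : z ≠ 0) :
    ∀ i, 0 < z i := by
  by_contra h
  push_neg at h
  obtain ⟨j0, hj0⟩ := h
  set S : Set (Fin m) := {i | 0 < z i} with hSdef
  have hS : S.Nonempty := by
    obtain ⟨i, hi⟩ := Function.ne_iff.mp hne
    exact ⟨i, lt_of_le_of_ne (hz0 i) (Ne.symm hi)⟩
  have hSc : Sᶜ.Nonempty := ⟨j0, fun hj => absurd hj (not_lt.mpr hj0)⟩
  obtain ⟨i, hiS, j, hjS, hAij⟩ := hconn S hS hSc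
  have hzj : z j = 0 := le_antisymm (not_lt.mp hjS) (hz0 j)
  have hij : i ≠ j := fun hh => by
    rw [hh] at hiS; exact absurd hiS hjS
  have hAji : 0 < A j i := by rw [hsymm.apply i j]; exact hAij
  have hpos : 0 < (A.mulVec z) j := by
    have : (A.mulVec z) j = ∑ k, A j k * z k := by
      simp [Matrix.mulVec, dotProduct]
    rw [this]
    refine Finset.sum_pos' (fun k _ => ?_) ⟨i, Finset.mem_univ i, ?_⟩
    · rcases eq_or_ne k j with rfl | hkj
      · simp [hzj]
      · exact mul_nonneg (hoff j k (Ne.symm hkj)) (hz0 k)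
    · exact mul_pos hAji hiS
  rw [hAz] at hpos
  simp at hpos

/-- Perron–Frobenius-type statement: a symmetric matrix with negative diagonal,
nonnegative off-diagonal entries and connected support graph whose quadratic
form is negative semidefinite but not negative definite has one-dimensional
kernel spanned by a strictly positive vector. -/
theorem kernel_of_connected_negSemidef {m : ℕ} (A : Matrix (Fin m) (Fin m) ℝ)
    (hsymm : A.IsSymm)
    (hdiag : ∀ i, A i i < 0)
    (hoff : ∀ i j, i ≠ j → 0 ≤ A i j)
    (hconn : ∀ S : Set (Fin m), S.Nonempty → Sᶜ.Nonempty →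
      ∃ i ∈ S, ∃ j ∈ Sᶜ, 0 < A i j)
    (hsemi : ∀ x : Fin m → ℝ, x ⬝ᵥ A.mulVec x ≤ 0)
    (hnotdef : ∃ x : Fin m → ℝ, x ≠ 0 ∧ x ⬝ᵥ A.mulVec x = 0) :
    ∃ v : Fin m → ℝ, (∀ i, 0 < v i) ∧ A.mulVec v = 0 ∧
      ∀ w : Fin m → ℝ, A.mulVec w = 0 → ∃ c : ℝ, w = c • v := by
  obtain ⟨x, hx0, hxq⟩ := hnotdef
  set v : Fin m → ℝ := fun i => |x i| with hv
  have hvq : v ⬝ᵥ A.mulVec v = 0 := pf_abs_quad A hoff hsemi x hxq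
  have hAv : A.mulVec v = 0 := pf_mulVec_zero A hsymm hsemi v hvq
  have hvne : v ≠ 0 := by
    intro hh
    apply hx0
    funext i
    have : |x i| = 0 := congrFun hh i
    simpa using this
  have hvpos : ∀ i, 0 < v i :=
    pf_pos A hsymm hoff hconn v (fun i => abs_nonneg _) hAv hvne
  refine ⟨v, hvpos, hAv, fun w hw => ?_⟩
  obtain ⟨i0, hi0⟩ := Function.ne_iff.mp hvne
  refine ⟨w i0 / v i0, ?_⟩
  set c : ℝ := w i0 / v i0 with hc
  set u : Fin m → ℝ := w - c • v with hu
  have hAu : A.mulVec u = 0 := by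
    rw [hu, Matrix.mulVec_sub, Matrix.mulVec_smul, hw, hAv]
    simp
  have huq : u ⬝ᵥ A.mulVec u = 0 := by rw [hAu]; simp
  have hui0 : u i0 = 0 := by
    have hvne0 : v i0 ≠ 0 := ne_of_gt (hvpos i0)
    simp [hu, hc, Pi.sub_apply, Pi.smul_apply, smul_eq_mul, div_mul_cancel₀ _ hvne0]
  have huz : u = 0 := by
    by_contra hune
    have habsq := pf_abs_quad A hoff hsemi u huq
    have hAabs := pf_mulVec_zero A hsymm hsemi _ habsq
    have habsne : (fun i => |u i|) ≠ 0 := by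
      intro hh
      apply hune
      funext i
      have : |u i| = 0 := congrFun hh i
      simpa using this
    have := pf_pos A hsymm hoff hconn _ (fun i => abs_nonneg _) hAabs habsne i0
    rw [hui0] at this
    simp at this
  have : w - c • v = 0 := huz
  funext i
  have := congrFun this i
  simp [Pi.sub_apply] at this
  simpa [Pi.smul_apply, smul_eq_mul] using sub_eq_zero.mp this
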